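/- Conservation of the Lagrangian magnetic field: let d ≥ 1, let η : ℝ × ℝ^d → ℝ^d be C² in (t, x) with spatial Jacobian matrix Dη(t, x) (entries (Dη)_{ij} = ∂η_i/∂x_j) invertible for all (t, x), set v := ∂_t η, and let b : ℝ × ℝ^d → ℝ^d be differentiable in t and satisfy the transport law ∂_t b(t, x) = D_x v(t, x) · ( (Dη(t, x))⁻¹ b(t, x) ) for all (t, x) (componentwise, ∂_t b_i = Σ_{j,k} b_j A_{jk} ∂_k v_i with A := ((Dη)⁻¹)ᵀ). Then for every x the vector (Dη(t, x))⁻¹ b(t, x) is independent of t; i.e., (Dη(t, x))⁻¹ b(t, x) = (Dη(0, x))⁻¹ b(0, x) for all t. -/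

import Mathlib

open Set Filter Matrix

noncomputable section

/-- Differentiability of the determinant of a matrix of differentiable functions. -/
private lemma diff_det' {n : ℕ} {A : ℝ → Matrix (Fin n) (Fin n) ℝ}
    (hA : ∀ i j, Differentiable ℝ fun t => A t i j) :
    Differentiable ℝ fun t => (A t).det := by
  simp only [Matrix.det_apply']
  exact Differentiable.fun_sum fun σ _ =>
    (Differentiable.fun_finset_prod fun i _ => hA (σ i) i).const_mul _

/-- conservation of the Lagrangian magnetic field.  If `η` is a `C²` flow map
with invertible spatial Jacobian `Dη` (entries `(Dη)_{ij} = ∂η_i/∂x_j`), `v = ∂_t η`, and `b`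
satisfies the transport law `∂_t b_i = Σ_{j,k} b_j A_{jk} ∂_k v_i` with `A = ((Dη)⁻¹)ᵀ`, then
`(Dη(t,x))⁻¹ b(t,x)` is independent of `t`. -/
theorem lagrangian_magnetic_field_conserved
    (d : ℕ) (hd : 1 ≤ d)
    (η b : ℝ × (Fin d → ℝ) → (Fin d → ℝ))
    (hη : ContDiff ℝ 2 η)
    (Dη : ℝ → (Fin d → ℝ) → Matrix (Fin d) (Fin d) ℝ)
    (hDη : ∀ (t : ℝ) (x : Fin d → ℝ) (i j : Fin d),
      Dη t x i j = fderiv ℝ (fun y => η (t, y) i) x (Pi.single j 1))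
    (hinv : ∀ (t : ℝ) (x : Fin d → ℝ), IsUnit (Dη t x).det)
    (v : ℝ × (Fin d → ℝ) → (Fin d → ℝ))
    (hv : ∀ (t : ℝ) (x : Fin d → ℝ), v (t, x) = deriv (fun s => η (s, x)) t)
    (hb : ∀ (t : ℝ) (x : Fin d → ℝ) (i : Fin d),
      HasDerivAt (fun s => b (s, x) i)
        (∑ j : Fin d, ∑ k : Fin d,
          b (t, x) j * (Dη t x)⁻¹ k j * fderiv ℝ (fun y => v (t, y) i) x (Pi.single k 1)) t) :
    ∀ (t : ℝ) (x : Fin d → ℝ),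
      ((Dη t x)⁻¹).mulVec (b (t, x)) = ((Dη 0 x)⁻¹).mulVec (b (0, x)) := by
  have hηd : Differentiable ℝ η := hη.differentiable two_ne_zero
  set g : ℝ × (Fin d → ℝ) → (ℝ × (Fin d → ℝ)) →L[ℝ] (Fin d → ℝ) := fderiv ℝ η with hg
  have hgc : ContDiff ℝ 1 g := hη.fderiv_right (by norm_num)
  have hgd : Differentiable ℝ g := hgc.differentiable one_ne_zero
  have hcurve : ∀ (t : ℝ) (x : Fin d → ℝ),
      HasDerivAt (fun s => ((s, x) : ℝ × (Fin d → ℝ))) ((1:ℝ), (0 : Fin d → ℝ)) t :=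
    fun t x => (hasDerivAt_id t).prodMk (hasDerivAt_const t x)
  have hveq : ∀ (t : ℝ) (y : Fin d → ℝ), v (t, y) = g (t, y) (1, 0) := by
    intro t y
    have h : HasDerivAt (fun s => η (s, y)) (g (t, y) (1, 0)) t :=
      hηd.differentiableAt.hasFDerivAt.comp_hasDerivAt t (hcurve t y)
    rw [hv, h.deriv]
  have hι : ∀ (t : ℝ) (x : Fin d → ℝ),
      HasFDerivAt (fun y => ((t, y) : ℝ × (Fin d → ℝ)))
        ((0 : (Fin d → ℝ) →L[ℝ] ℝ).prod (ContinuousLinearMap.id ℝ (Fin d → ℝ))) x :=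
    fun t x => (hasFDerivAt_const t x).prodMk (hasFDerivAt_id x)
  have hDη' : ∀ (s : ℝ) (x : Fin d → ℝ) (i j : Fin d),
      Dη s x i j = g (s, x) (0, Pi.single j 1) i := by
    intro s x i j
    have hin : HasFDerivAt (fun y => η (s, y))
        ((g (s, x)).comp ((0 : (Fin d → ℝ) →L[ℝ] ℝ).prod (ContinuousLinearMap.id ℝ (Fin d → ℝ)))) x :=
      hηd.differentiableAt.hasFDerivAt.comp x (hι s x)
    have h1 : HasFDerivAt (fun y => η (s, y) i)
        ((ContinuousLinearMap.proj (R := ℝ) (φ := fun _ : Fin d => ℝ) i).comp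
          ((g (s, x)).comp ((0 : (Fin d → ℝ) →L[ℝ] ℝ).prod (ContinuousLinearMap.id ℝ (Fin d → ℝ))))) x :=
      (ContinuousLinearMap.proj (R := ℝ) (φ := fun _ : Fin d => ℝ) i).hasFDerivAt.comp x hin
    rw [hDη, h1.fderiv]
    simp
  have hDv : ∀ (t : ℝ) (x : Fin d → ℝ) (i k : Fin d),
      fderiv ℝ (fun y => v (t, y) i) x (Pi.single k 1)
        = fderiv ℝ g (t, x) (1, 0) (0, Pi.single k 1) i := by
    intro t x i k
    have hfun : (fun y => v (t, y) i) = fun y => g (t, y) ((1:ℝ), (0 : Fin d → ℝ)) i :=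
      funext fun y => by rw [hveq]
    have hgy : HasFDerivAt (fun y => g (t, y))
        ((fderiv ℝ g (t, x)).comp
          ((0 : (Fin d → ℝ) →L[ℝ] ℝ).prod (ContinuousLinearMap.id ℝ (Fin d → ℝ)))) x :=
      hgd.differentiableAt.hasFDerivAt.comp x (hι t x)
    have h2 : HasFDerivAt (fun y => g (t, y) ((1:ℝ), (0 : Fin d → ℝ)) i)
        (((ContinuousLinearMap.proj (R := ℝ) (φ := fun _ : Fin d => ℝ) i).comp
            (ContinuousLinearMap.apply ℝ (Fin d → ℝ) ((1:ℝ), (0 : Fin d → ℝ)))).comp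
          ((fderiv ℝ g (t, x)).comp
            ((0 : (Fin d → ℝ) →L[ℝ] ℝ).prod (ContinuousLinearMap.id ℝ (Fin d → ℝ))))) x :=
      ((ContinuousLinearMap.proj (R := ℝ) (φ := fun _ : Fin d => ℝ) i).comp
        (ContinuousLinearMap.apply ℝ (Fin d → ℝ) ((1:ℝ), (0 : Fin d → ℝ)))).hasFDerivAt.comp x hgy
    rw [hfun, h2.fderiv]
    have hsymm := second_derivative_symmetric (f := η) (f' := g) (f'' := fderiv ℝ g (t, x))
      (fun y => hηd.differentiableAt.hasFDerivAt) hgd.differentiableAt.hasFDerivAt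
      ((0:ℝ), Pi.single k 1) ((1:ℝ), (0 : Fin d → ℝ))
    simp only [ContinuousLinearMap.comp_apply, ContinuousLinearMap.prod_apply,
      ContinuousLinearMap.zero_apply, ContinuousLinearMap.id_apply,
      ContinuousLinearMap.apply_apply, ContinuousLinearMap.proj_apply]
    rw [hsymm]
  have hM : ∀ (t : ℝ) (x : Fin d → ℝ) (i j : Fin d),
      HasDerivAt (fun s => Dη s x i j)
        (fderiv ℝ (fun y => v (t, y) i) x (Pi.single j 1)) t := by
    intro t x i j
    have h3 : HasDerivAt (fun s => g (s, x)) (fderiv ℝ g (t, x) (1, 0)) t :=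
      hgd.differentiableAt.hasFDerivAt.comp_hasDerivAt t (hcurve t x)
    have h4 : HasDerivAt (fun s => g (s, x) (0, Pi.single j 1) i)
        (((ContinuousLinearMap.proj (R := ℝ) (φ := fun _ : Fin d => ℝ) i).comp
          (ContinuousLinearMap.apply ℝ (Fin d → ℝ) ((0:ℝ), Pi.single j 1)))
            (fderiv ℝ g (t, x) (1, 0))) t := by
      have := ((ContinuousLinearMap.proj (R := ℝ) (φ := fun _ : Fin d => ℝ) i).comp
        (ContinuousLinearMap.apply ℝ (Fin d → ℝ) ((0:ℝ), Pi.single j 1))).hasFDerivAt.comp_hasDerivAt t h3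
      exact this
    have h5 : (fun s => Dη s x i j) = fun s => g (s, x) (0, Pi.single j 1) i :=
      funext fun s => hDη' s x i j
    rw [h5, hDv t x i j]
    simpa using h4
  intro t₀ x
  set c : ℝ → Fin d → ℝ := fun s => b (s, x) with hc
  set M : ℝ → Matrix (Fin d) (Fin d) ℝ := fun s => Dη s x with hMdef
  have hMdiff : ∀ i j, Differentiable ℝ fun s => M s i j := fun i j s =>
    (hM s x i j).differentiableAt
  have hdet0 : ∀ s, (M s).det ≠ 0 := fun s => (hinv s x).ne_zero
  have hdetdiff : Differentiable ℝ fun s => (M s).det := diff_det' hMdiff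
  have hadjdiff : ∀ i j, Differentiable ℝ fun s => (M s).adjugate i j := by
    intro i j
    simp only [Matrix.adjugate_apply]
    apply diff_det'
    intro k l
    simp only [Matrix.updateRow_apply]
    split_ifs with h
    · exact differentiable_const _
    · exact hMdiff k l
  have hinvdiff : ∀ i j, Differentiable ℝ fun s => (M s)⁻¹ i j := by
    intro i j
    have h : (fun s => (M s)⁻¹ i j) = fun s => ((M s).det)⁻¹ * (M s).adjugate i j := by
      funext s
      rw [Matrix.inv_def]
      simp [Matrix.smul_apply, Ring.inverse_eq_inv', smul_eq_mul]
    rw [h]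
    exact (hdetdiff.inv hdet0).mul (hadjdiff i j)
  set w : ℝ → Fin d → ℝ := fun s => ((M s)⁻¹).mulVec (c s) with hwdef
  have hcdiff : ∀ i, Differentiable ℝ fun s => c s i := fun i s => (hb s x i).differentiableAt
  have hwcoord : ∀ s k, w s k = ∑ j, (M s)⁻¹ k j * c s j := by
    intro s k
    simp [hwdef, Matrix.mulVec, dotProduct]
  have hwdiff : ∀ k, Differentiable ℝ fun s => w s k := by
    intro k
    have h : (fun s => w s k) = fun s => ∑ j, (M s)⁻¹ k j * c s j :=
      funext fun s => hwcoord s k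
    rw [h]
    exact Differentiable.fun_sum fun j _ => (hinvdiff k j).mul (hcdiff j)
  have hwzero : ∀ k s, deriv (fun u => w u k) s = 0 := by
    intro k s
    set p : Fin d → ℝ := fun l => deriv (fun u => w u l) s with hp
    have hwHD : ∀ l, HasDerivAt (fun u => w u l) (p l) s := fun l => ((hwdiff l) s).hasDerivAt
    have hid : ∀ i u, (∑ j, M u i j * w u j) = c u i := by
      intro i u
      have h5 : (M u).mulVec (w u) = c u := by
        rw [hwdef, Matrix.mulVec_mulVec, Matrix.mul_nonsing_inv _ (hinv u x),
          Matrix.one_mulVec]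
      calc (∑ j, M u i j * w u j) = (M u).mulVec (w u) i := by
            simp [Matrix.mulVec, dotProduct]
        _ = c u i := by rw [h5]
    have heq : ∀ i,
        (∑ j, (fderiv ℝ (fun y => v (s, y) i) x (Pi.single j 1) * w s j + M s i j * p j))
          = ∑ j, ∑ k', c s j * (M s)⁻¹ k' j *
              fderiv ℝ (fun y => v (s, y) i) x (Pi.single k' 1) := by
      intro i
      have e1 : HasDerivAt (fun u => ∑ j, M u i j * w u j)
          (∑ j, (fderiv ℝ (fun y => v (s, y) i) x (Pi.single j 1) * w s j + M s i j * p j)) s :=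
        HasDerivAt.fun_sum fun j _ => (hM s x i j).mul (hwHD j)
      have e2 : HasDerivAt (fun u => c u i)
          (∑ j, (fderiv ℝ (fun y => v (s, y) i) x (Pi.single j 1) * w s j + M s i j * p j)) s := by
        have hff : (fun u => ∑ j, M u i j * w u j) = fun u => c u i :=
          funext fun u => hid i u
        rwa [hff] at e1
      exact e2.unique (hb s x i)
    have hps : ∀ i, (∑ j, M s i j * p j) = 0 := by
      intro i
      have h6 := heq i
      rw [Finset.sum_add_distrib] at h6
      have h7 : (∑ j, ∑ k', c s j * (M s)⁻¹ k' j *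
            fderiv ℝ (fun y => v (s, y) i) x (Pi.single k' 1))
          = ∑ k', fderiv ℝ (fun y => v (s, y) i) x (Pi.single k' 1) * w s k' := by
        rw [Finset.sum_comm]
        refine Finset.sum_congr rfl fun k' _ => ?_
        rw [hwcoord s k', Finset.mul_sum]
        refine Finset.sum_congr rfl fun j _ => by ring
      rw [h7] at h6
      linarith
    have hmv : (M s).mulVec p = 0 := by
      funext i
      simpa [Matrix.mulVec, dotProduct] using hps i
    have hp0 : p = 0 := by
      have h8 := congrArg (fun z => ((M s)⁻¹).mulVec z) hmv
      simpa [Matrix.mulVec_mulVec, Matrix.nonsing_inv_mul (M s) (hinv s x),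
        Matrix.one_mulVec, Matrix.mulVec_zero] using h8
    show p k = 0
    rw [hp0]
    rfl
  have final : w t₀ = w 0 :=
    funext fun k => is_const_of_deriv_eq_zero (hwdiff k) (hwzero k) t₀ 0
  exact final

end
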